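/- arXiv:2004.07982 — 2 statements merged into one kernel-verified Lean document; each statement's English description precedes it below -/
import Mathlib

section
/- The solution of the upper triangular linear system P·β = e, where P is the n×n matrix with entries p_{ij} = 0 for i>j, p_{1j} = 1, and p_{ij} = ((j-1)!/(j-i)!)·Δ^{i-1} otherwise (Δ > 0), and e = (0,...,0,b_n)^T, is given by β_{n-k} = ((-1)^k · b_n) / ((n-k-1)! · k! · Δ^{n-1}) for k = 0,1,...,n-1. -/
/-- The solution of the upper triangular system `P β = (0,…,0,bₙ)ᵀ`,
where `P i j = (j!)/(j-i)! · Δ^i` (0-based; zero below the diagonal),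
is `β_{n-1-k} = (-1)^k bₙ / ((n-k-1)! k! Δ^{n-1})`. -/
theorem stmt0 (n : ℕ) (hn : 1 ≤ n) (Δ : ℝ) (hΔ : 0 < Δ) (bn : ℝ)
    (P : Matrix (Fin n) (Fin n) ℝ)
    (hP : ∀ i j : Fin n, P i j =
      if (j : ℕ) < (i : ℕ) then 0
      else ((Nat.factorial (j : ℕ) : ℝ) / (Nat.factorial ((j : ℕ) - (i : ℕ)) : ℝ)) * Δ ^ (i : ℕ))
    (β : Fin n → ℝ)
    (hβ : ∀ i : Fin n, β i = ((-1 : ℝ) ^ (n - 1 - (i : ℕ)) * bn) /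
      ((Nat.factorial (i : ℕ) : ℝ) * (Nat.factorial (n - 1 - (i : ℕ)) : ℝ) * Δ ^ (n - 1)))
    (e : Fin n → ℝ)
    (he : ∀ i : Fin n, e i = if (i : ℕ) = n - 1 then bn else 0) :
    P.mulVec β = e := by
  funext i
  simp only [Matrix.mulVec, dotProduct, he]
  set m := n - 1 - (i : ℕ) with hm
  have hi : (i : ℕ) < n := i.isLt
  have hni : n - (i : ℕ) = m + 1 := by omega
  have hΔ1 : (Δ : ℝ) ^ (n - 1) ≠ 0 := by positivity
  set f : ℕ → ℝ := fun j =>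
    (if j < (i : ℕ) then 0
      else ((Nat.factorial j : ℝ) / (Nat.factorial (j - (i : ℕ)) : ℝ)) * Δ ^ (i : ℕ)) *
    (((-1 : ℝ)) ^ (n - 1 - j) * bn /
      ((Nat.factorial j : ℝ) * (Nat.factorial (n - 1 - j) : ℝ) * Δ ^ (n - 1))) with hf
  have h1 : ∑ j : Fin n, P i j * β j = ∑ j ∈ Finset.range n, f j := by
    rw [← Fin.sum_univ_eq_sum_range]
    refine Finset.sum_congr rfl fun j _ => ?_
    rw [hP, hβ, hf]
  have h2 : ∑ j ∈ Finset.range n, f j = ∑ j ∈ Finset.Ico (i : ℕ) n, f j := by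
    refine (Finset.sum_subset ?_ ?_).symm
    · intro x hx
      simp only [Finset.mem_Ico] at hx
      exact Finset.mem_range.mpr hx.2
    · intro x hx hx'
      simp only [Finset.mem_range] at hx
      simp only [Finset.mem_Ico, not_and, not_le, not_lt] at hx'
      have : x < (i : ℕ) := by omega
      simp [hf, this]
  have h3 : ∑ j ∈ Finset.Ico (i : ℕ) n, f j =
      ∑ k ∈ Finset.range (m + 1), f ((i : ℕ) + k) := by
    rw [Finset.sum_Ico_eq_sum_range, hni]
  have h4 : ∀ k ∈ Finset.range (m + 1), f ((i : ℕ) + k) =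
      (bn * Δ ^ (i : ℕ) * (-1 : ℝ) ^ m / (Δ ^ (n - 1) * (Nat.factorial m : ℝ))) *
        ((-1 : ℝ) ^ k * (Nat.choose m k : ℝ)) := by
    intro k hk
    have hkm : k ≤ m := Nat.lt_succ_iff.mp (Finset.mem_range.mp hk)
    have hnot : ¬ ((i : ℕ) + k < (i : ℕ)) := by omega
    have hsub1 : (i : ℕ) + k - (i : ℕ) = k := by omega
    have hsub2 : n - 1 - ((i : ℕ) + k) = m - k := by omega
    have hsign : ((-1 : ℝ)) ^ (m - k) = (-1 : ℝ) ^ m * (-1 : ℝ) ^ k := by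
      have h2k : ((-1 : ℝ)) ^ (2 * k) = 1 := by
        rw [pow_mul]; norm_num
      have : (-1 : ℝ) ^ m * (-1 : ℝ) ^ k = (-1 : ℝ) ^ (m + k) := by
        rw [pow_add]
      rw [this, show m + k = (m - k) + 2 * k by omega, pow_add, h2k, mul_one]
    have hchoose : (Nat.choose m k : ℝ) * (Nat.factorial k : ℝ) *
        (Nat.factorial (m - k) : ℝ) = (Nat.factorial m : ℝ) := by
      exact_mod_cast congrArg (Nat.cast : ℕ → ℝ)
        (Nat.choose_mul_factorial_mul_factorial hkm)
    have hfac : ∀ a : ℕ, ((Nat.factorial a : ℝ)) ≠ 0 := fun a => by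
      exact_mod_cast (Nat.factorial_pos a).ne'
    simp only [hf, hnot, if_false, hsub1, hsub2, hsign]
    field_simp
    rw [← hchoose]
    ring
  have h5 : ∑ k ∈ Finset.range (m + 1), (-1 : ℝ) ^ k * (Nat.choose m k : ℝ) =
      if m = 0 then 1 else 0 := by
    have := Int.alternating_sum_range_choose (n := m)
    have := congrArg (Int.cast : ℤ → ℝ) this
    push_cast at this
    rw [this]
  rw [h1, h2, h3, Finset.sum_congr rfl h4, ← Finset.mul_sum, h5]
  by_cases hcase : (i : ℕ) = n - 1
  · have hm0 : m = 0 := by omega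
    simp only [hcase, hm0, if_pos rfl, if_true, Nat.factorial, pow_zero, mul_one,
      Nat.cast_one]
    field_simp
  · have hm0 : m ≠ 0 := by omega
    simp [hcase, hm0]
end

section
/- Let A ∈ R^{n×n} be a single Jordan block with eigenvalue λ, and let b, b' ∈ R^n be two vectors agreeing in their last coordinate: b_n = b'_n. Then for every N, the n-dimensional volumes of the zonotopes generated by the columns of [b, Ab, ..., A^{N-1}b] and [b', Ab', ..., A^{N-1}b'] are equal. -/
open MeasureTheory

lemma spow_entry {n : ℕ} (S : Matrix (Fin n) (Fin n) ℝ)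
    (hS : ∀ i j, S i j = if (j:ℕ) = (i:ℕ)+1 then 1 else 0) (k : ℕ) (i j : Fin n) :
    (S^k) i j = if (j:ℕ) = (i:ℕ)+k then 1 else 0 := by
  induction k generalizing i with
  | zero => simp [Matrix.one_apply, Fin.ext_iff, eq_comm]
  | succ k ih =>
    rw [pow_succ']
    rw [Matrix.mul_apply]
    by_cases h : (i:ℕ)+1 < n
    · have : ∀ l : Fin n, S i l * (S^k) l j = if l = (⟨(i:ℕ)+1, h⟩ : Fin n) then (S^k) l j else 0 := by
        intro l
        rw [hS]
        by_cases hl : l = (⟨(i:ℕ)+1, h⟩ : Fin n)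
        · simp [hl]
        · have : ¬ ((l:ℕ) = (i:ℕ)+1) := by
            intro hc; exact hl (Fin.ext hc)
          simp [this, hl]
      rw [Finset.sum_congr rfl (fun l _ => this l), Finset.sum_ite_eq' ]
      simp only [Finset.mem_univ, if_true, ih]
      rw [show (i:ℕ)+1+k = (i:ℕ)+(k+1) from by omega]
    · have hz : ∀ l : Fin n, S i l * (S^k) l j = 0 := by
        intro l
        rw [hS]
        have : ¬ ((l:ℕ) = (i:ℕ)+1) := by omega
        simp [this]
      rw [Finset.sum_congr rfl (fun l _ => hz l), Finset.sum_const_zero]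
      have : ¬ ((j:ℕ) = (i:ℕ)+(k+1)) := by omega
      simp [this]

lemma spow_mulVec {n : ℕ} (S : Matrix (Fin n) (Fin n) ℝ)
    (hS : ∀ i j, S i j = if (j:ℕ) = (i:ℕ)+1 then 1 else 0) (k : ℕ) (v : Fin n → ℝ) (i : Fin n) :
    ((S^k).mulVec v) i = if h : (i:ℕ)+k < n then v ⟨(i:ℕ)+k, h⟩ else 0 := by
  rw [Matrix.mulVec, dotProduct]
  by_cases h : (i:ℕ)+k < n
  · have : ∀ j : Fin n, (S^k) i j * v j = if j = (⟨(i:ℕ)+k, h⟩ : Fin n) then v j else 0 := by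
      intro j
      rw [spow_entry S hS]
      by_cases hj : j = (⟨(i:ℕ)+k, h⟩ : Fin n)
      · simp [hj]
      · have : ¬ ((j:ℕ) = (i:ℕ)+k) := fun hc => hj (Fin.ext hc)
        simp [this, hj]
    rw [Finset.sum_congr rfl (fun j _ => this j), Finset.sum_ite_eq']
    simp [h]
  · have : ∀ j : Fin n, (S^k) i j * v j = 0 := by
      intro j
      rw [spow_entry S hS]
      have : ¬ ((j:ℕ) = (i:ℕ)+k) := by omega
      simp [this]
    rw [Finset.sum_congr rfl (fun j _ => this j), Finset.sum_const_zero]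
    simp [h]

lemma sum_smul_mulVec {n m : ℕ} (c : Fin m → ℝ) (f : Fin m → Matrix (Fin n) (Fin n) ℝ)
    (v : Fin n → ℝ) :
    (∑ d : Fin m, c d • f d).mulVec v = ∑ d : Fin m, c d • (f d).mulVec v := by
  simp only [← Matrix.toLin'_apply, map_sum, _root_.map_smul, LinearMap.coe_sum,
    Finset.sum_apply, LinearMap.smul_apply]

/-- For a single Jordan block `A` with eigenvalue `λ`, if `b` and `b'`
agree in their last coordinate, then for every `N` the volumes of the zonotopes
generated by `b, Ab, …, A^{N-1}b` and `b', Ab', …, A^{N-1}b'` coincide. -/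
theorem stmt6 (n : ℕ) (hn : 1 ≤ n) (lam : ℝ)
    (A : Matrix (Fin n) (Fin n) ℝ)
    (hA : ∀ i j : Fin n, A i j =
      if i = j then lam else if (j : ℕ) = (i : ℕ) + 1 then 1 else 0)
    (b b' : Fin n → ℝ) (hlast : b ⟨n - 1, by omega⟩ = b' ⟨n - 1, by omega⟩)
    (N : ℕ) :
    volume {x : Fin n → ℝ | ∃ c : Fin N → ℝ, (∀ k, |c k| ≤ 1) ∧
        x = ∑ k : Fin N, c k • (A ^ (k : ℕ)).mulVec b} =
    volume {x : Fin n → ℝ | ∃ c : Fin N → ℝ, (∀ k, |c k| ≤ 1) ∧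
        x = ∑ k : Fin N, c k • (A ^ (k : ℕ)).mulVec b'} := by
  have hlt : n - 1 < n := by omega
  set last : Fin n := ⟨n - 1, hlt⟩ with hlastdef
  have hblast : b last = b' last := hlast
  have hlastval : (last : ℕ) = n - 1 := rfl
  set S : Matrix (Fin n) (Fin n) ℝ :=
    Matrix.of fun i j => if (j:ℕ) = (i:ℕ)+1 then 1 else 0 with hSdef
  have hS : ∀ i j, S i j = if (j:ℕ) = (i:ℕ)+1 then 1 else 0 := fun i j => rfl
  have hAS : A = lam • (1 : Matrix (Fin n) (Fin n) ℝ) + S := by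
    ext i j
    rw [hA, Matrix.add_apply, Matrix.smul_apply, Matrix.one_apply, hS]
    by_cases h : i = j
    · have : ¬ ((j:ℕ) = (i:ℕ)+1) := by omega
      simp [h, this]
    · simp [h]
  -- action on the last coordinate
  have hAklast : ∀ (k : ℕ) (v : Fin n → ℝ), ((A^k).mulVec v) last = lam^k * v last := by
    intro k
    induction k with
    | zero => intro v; simp [Matrix.one_mulVec]
    | succ k ih =>
      intro v
      rw [pow_succ', ← Matrix.mulVec_mulVec]
      have h1 : ∀ w : Fin n → ℝ, (A.mulVec w) last = lam * w last := by
        intro w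
        rw [hAS, Matrix.add_mulVec, Matrix.smul_mulVec, Matrix.one_mulVec]
        have h2 : (S.mulVec w) last = 0 := by
          have h3 := spow_mulVec S hS 1 w last
          rw [pow_one] at h3
          rw [h3]
          have : ¬ ((last:ℕ) + 1 < n) := by rw [hlastval]; omega
          simp [this]
        simp [Pi.add_apply, h2]
      rw [h1, ih, pow_succ]
      ring
  by_cases hb : b last = 0
  · -- degenerate case: both zonotopes lie in the hyperplane x_last = 0
    have hb' : b' last = 0 := hblast ▸ hb
    have key : ∀ v : Fin n → ℝ, v last = 0 →
        volume {x : Fin n → ℝ | ∃ c : Fin N → ℝ, (∀ k, |c k| ≤ 1) ∧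
          x = ∑ k : Fin N, c k • (A ^ (k : ℕ)).mulVec v} = 0 := by
      intro v hv
      have hker : (LinearMap.ker (LinearMap.proj (R := ℝ) (φ := fun _ : Fin n => ℝ) last)) ≠ ⊤ := by
        intro h
        have h1 : (fun _ : Fin n => (1:ℝ)) ∈ LinearMap.ker
            (LinearMap.proj (R := ℝ) (φ := fun _ : Fin n => ℝ) last) := h ▸ Submodule.mem_top
        simp [LinearMap.mem_ker] at h1
      have hzero : volume ((LinearMap.ker (LinearMap.proj (R := ℝ)
          (φ := fun _ : Fin n => ℝ) last) : Submodule ℝ (Fin n → ℝ)) : Set (Fin n → ℝ)) = 0 :=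
        Measure.addHaar_submodule volume _ hker
      refine measure_mono_null ?_ hzero
      rintro x ⟨γ, hγ, rfl⟩
      simp only [SetLike.mem_coe, LinearMap.mem_ker, LinearMap.proj_apply]
      show (∑ k : Fin N, γ k • (A ^ (k : ℕ)).mulVec v) last = 0
      rw [Finset.sum_apply]
      apply Finset.sum_eq_zero
      intro k _
      simp [hAklast, hv]
    rw [key b hb, key b' hb']
  · -- main case: build a unitriangular Toeplitz matrix T with T b = b', T A = A T
    set M : Matrix (Fin n) (Fin n) ℝ := Matrix.of fun i d => ((S^(d:ℕ)).mulVec b) i with hMdef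
    have hMapp : ∀ i d : Fin n, M i d = if h : (i:ℕ)+(d:ℕ) < n then b ⟨(i:ℕ)+(d:ℕ), h⟩ else 0 :=
      fun i d => spow_mulVec S hS d b i
    -- invertibility of M
    have hRtri : (M.submatrix Fin.rev id).BlockTriangular OrderDual.toDual := by
      intro i j hij
      have hij' : (i:ℕ) < (j:ℕ) := hij
      rw [Matrix.submatrix_apply, id_eq, hMapp]
      have hrev : ((Fin.rev i : Fin n) : ℕ) = n - ((i:ℕ) + 1) := Fin.val_rev i
      have : ¬ (((Fin.rev i : Fin n) : ℕ) + (j:ℕ) < n) := by omega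
      rw [dif_neg this]
    have hRdiag : ∀ i, (M.submatrix Fin.rev id) i i = b last := by
      intro i
      rw [Matrix.submatrix_apply, id_eq, hMapp]
      have hrev : ((Fin.rev i : Fin n) : ℕ) = n - ((i:ℕ) + 1) := Fin.val_rev i
      have h : ((Fin.rev i : Fin n) : ℕ) + (i:ℕ) < n := by omega
      rw [dif_pos h]
      exact congrArg b (Fin.ext (show ((Fin.rev i : Fin n):ℕ) + (i:ℕ) = n - 1 by
        rw [hrev]; omega))
    have hdetR : (M.submatrix Fin.rev id).det = (b last)^n := by
      rw [Matrix.det_of_lowerTriangular _ hRtri]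
      rw [Finset.prod_congr rfl (fun i _ => hRdiag i), Finset.prod_const]
      simp
    have hdetM : M.det ≠ 0 := by
      intro h0
      have h1 : (M.submatrix Fin.revPerm id).det
          = (Equiv.Perm.sign Fin.revPerm : ℤ) * M.det := Matrix.det_permute _ M
      have h2 : (M.submatrix Fin.rev id) = (M.submatrix Fin.revPerm id) := rfl
      rw [h2, h1, h0, mul_zero] at hdetR
      exact pow_ne_zero n hb hdetR.symm
    have hMunit : IsUnit M.det := isUnit_iff_ne_zero.mpr hdetM
    set c : Fin n → ℝ := (M⁻¹).mulVec b' with hcdef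
    have hMc : M.mulVec c = b' := by
      rw [hcdef, Matrix.mulVec_mulVec, Matrix.mul_nonsing_inv _ hMunit, Matrix.one_mulVec]
    have hzero_lt : (0:ℕ) < n := hn
    set z : Fin n := ⟨0, hzero_lt⟩ with hzdef
    have hzval : (z : ℕ) = 0 := rfl
    have hc0 : c z = 1 := by
      have h1 := congrFun hMc last
      rw [Matrix.mulVec, dotProduct] at h1
      have h2 : ∀ d : Fin n, M last d * c d = if d = z then b last * c d else 0 := by
        intro d
        rw [hMapp]
        by_cases hd : d = z
        · subst hd
          have h3 : (last:ℕ) + (z:ℕ) < n := by rw [hlastval, hzval]; omega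
          rw [dif_pos h3, if_pos rfl,
            show (⟨(last:ℕ)+(z:ℕ), h3⟩ : Fin n) = last from
              Fin.ext (show (last:ℕ)+(z:ℕ) = n - 1 by rw [hlastval, hzval]; omega)]
        · have hd' : (d:ℕ) ≠ 0 := by
            intro hc'; exact hd (Fin.ext hc')
          have h3 : ¬ ((last:ℕ) + (d:ℕ) < n) := by rw [hlastval]; omega
          rw [dif_neg h3, if_neg hd, zero_mul]
      rw [Finset.sum_congr rfl (fun d _ => h2 d), Finset.sum_ite_eq'] at h1
      simp only [Finset.mem_univ, if_true] at h1
      rw [← hblast] at h1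
      -- h1 : b last * c z = b last
      have := mul_left_cancel₀ hb (h1.trans (mul_one (b last)).symm)
      exact this
    set T : Matrix (Fin n) (Fin n) ℝ := ∑ d : Fin n, c d • S^(d:ℕ) with hTdef
    have hTb : T.mulVec b = b' := by
      rw [hTdef, sum_smul_mulVec]
      funext i
      rw [← hMc, Matrix.mulVec, dotProduct, Finset.sum_apply]
      apply Finset.sum_congr rfl
      intro d _
      rw [Pi.smul_apply, smul_eq_mul, hMdef, mul_comm]
      rfl
    have hcommST : Commute S T := by
      rw [hTdef]
      apply Commute.sum_right
      intro d _
      exact ((Commute.refl S).pow_right _).smul_right _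
    have hcommAT : Commute A T := by
      rw [hAS]
      exact Commute.add_left (((Commute.one_left T).smul_left lam)) hcommST
    have hTtri : T.BlockTriangular id := by
      intro i j hij
      have hij' : (j:ℕ) < (i:ℕ) := hij
      rw [hTdef, Matrix.sum_apply]
      apply Finset.sum_eq_zero
      intro d _
      rw [Matrix.smul_apply, spow_entry S hS]
      have : ¬ ((j:ℕ) = (i:ℕ) + (d:ℕ)) := by omega
      simp [this]
    have hTdiag : ∀ i, T i i = 1 := by
      intro i
      rw [hTdef, Matrix.sum_apply]
      have h2 : ∀ d : Fin n, (c d • S^(d:ℕ)) i i = if d = z then c d else 0 := by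
        intro d
        rw [Matrix.smul_apply, spow_entry S hS]
        by_cases hd : d = z
        · have hdv : (d:ℕ) = 0 := by rw [hd, hzval]
          simp [hdv, hd, hzval]
        · have hd' : (d:ℕ) ≠ 0 := fun hc' => hd (Fin.ext hc')
          have : ¬ ((i:ℕ) = (i:ℕ) + (d:ℕ)) := by omega
          simp [this, hd, hd']
      rw [Finset.sum_congr rfl (fun d _ => h2 d), Finset.sum_ite_eq']
      simp [hc0]
    have hTdet : T.det = 1 := by
      rw [Matrix.det_of_upperTriangular hTtri]
      simp [hTdiag]
    -- the image computation
    have hTsum : ∀ γ : Fin N → ℝ,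
        T.mulVec (∑ k : Fin N, γ k • (A^(k:ℕ)).mulVec b)
          = ∑ k : Fin N, γ k • (A^(k:ℕ)).mulVec b' := by
      intro γ
      have hlin : T.mulVec (∑ k : Fin N, γ k • (A^(k:ℕ)).mulVec b)
          = ∑ k : Fin N, γ k • T.mulVec ((A^(k:ℕ)).mulVec b) := by
        simp only [← Matrix.toLin'_apply, map_sum, _root_.map_smul]
      rw [hlin]
      apply Finset.sum_congr rfl
      intro k _
      congr 1
      rw [Matrix.mulVec_mulVec, ← (hcommAT.pow_left (k:ℕ)).eq, ← Matrix.mulVec_mulVec, hTb]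
    have himg : {x : Fin n → ℝ | ∃ γ : Fin N → ℝ, (∀ k, |γ k| ≤ 1) ∧
          x = ∑ k : Fin N, γ k • (A ^ (k : ℕ)).mulVec b'}
        = (fun x => T.mulVec x) '' {x : Fin n → ℝ | ∃ γ : Fin N → ℝ, (∀ k, |γ k| ≤ 1) ∧
          x = ∑ k : Fin N, γ k • (A ^ (k : ℕ)).mulVec b} := by
      ext x
      constructor
      · rintro ⟨γ, hγ, rfl⟩
        exact ⟨∑ k : Fin N, γ k • (A^(k:ℕ)).mulVec b, ⟨γ, hγ, rfl⟩, hTsum γ⟩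
      · rintro ⟨y, ⟨γ, hγ, rfl⟩, rfl⟩
        exact ⟨γ, hγ, hTsum γ⟩

    rw [himg]
    have hcoe : (fun x : Fin n → ℝ => T.mulVec x) = ⇑(Matrix.toLin' T) := by
      funext x; rw [Matrix.toLin'_apply]
    rw [hcoe, Measure.addHaar_image_linearMap]
    rw [LinearMap.det_toLin', hTdet]
    simp
end
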